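/- Recursion for the alternating decomposition sum (expansion step in the proof of Lemma 3.2). For each nonempty word w over A define D(w) := Σ_{k=1}^{|w|} (−1)^{k−1} Σ_{(u_1,…,u_k) : each u_i nonempty, u_1⋯u_k = w} u_1 ⧢ ⋯ ⧢ u_k ∈ ℝ⟨A⟩. Then for every word w = a_1⋯a_{n+1} with n ≥ 1, D(w) = a_1⋯a_{n+1} − Σ_{k=0}^{n−1} (a_1⋯a_{k+1}) ⧢ D(a_{k+2}⋯a_{n+1}). -/

import Mathlib

/-!
Words over an alphabet `A` are elements of `List A`; the free noncommutative
algebra `ℝ⟨A⟩` is realised as the free `ℝ`-module `List A →₀ ℝ` with the words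
as an `ℝ`-basis (a word `w` is the element `Finsupp.single w 1`, and
concatenation of words is list append).
-/

variable {A : Type*}

/-- The shuffle product of two words, valued in `ℝ⟨A⟩ = List A →₀ ℝ`:
`1 ⧢ w = w ⧢ 1 = w` and
`(a·u) ⧢ (b·v) = a·(u ⧢ (b·v)) + b·((a·u) ⧢ v)`,
where prepending a letter to every word of an element is `Finsupp.mapDomain (List.cons _)`. -/
noncomputable def shuffle : List A → List A → (List A →₀ ℝ)
  | [], v => Finsupp.single v 1
  | u, [] => Finsupp.single u 1
  | a :: u, b :: v =>
      Finsupp.mapDomain (List.cons a) (shuffle u (b :: v)) +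
        Finsupp.mapDomain (List.cons b) (shuffle (a :: u) v)
  termination_by u v => u.length + v.length

/-- The bilinear extension of the shuffle product to all of `ℝ⟨A⟩`. -/
noncomputable def shP (P Q : List A →₀ ℝ) : List A →₀ ℝ :=
  P.sum fun u cu => Q.sum fun v cv => (cu * cv) • shuffle u v

/-- The shuffle product `u₁ ⧢ u₂ ⧢ ⋯ ⧢ u_k` of a finite list of words
(the empty shuffle being the empty word, the unit of the shuffle algebra). -/
noncomputable def shuffleList (L : List (List A)) : List A →₀ ℝ :=
  L.foldr (fun u acc => shP (Finsupp.single u 1) acc) (Finsupp.single [] 1)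

/-- The unsigned reversal `ρ`, with `ρ(a₁⋯aₙ) = aₙ⋯a₁` on words, extended linearly. -/
noncomputable def rho (P : List A →₀ ℝ) : List A →₀ ℝ :=
  Finsupp.mapDomain List.reverse P

/-- The signed reversal `α`, with `α(a₁⋯aₙ) = (-1)ⁿ aₙ⋯a₁` on words, extended linearly. -/
noncomputable def alphaMap (P : List A →₀ ℝ) : List A →₀ ℝ :=
  P.sum fun w c => Finsupp.single w.reverse ((-1 : ℝ) ^ w.length * c)

/-- `D w = Σ_{k=1}^{|w|} (−1)^{k−1} Σ_{u₁⋯u_k = w, each uᵢ nonempty} u₁ ⧢ ⋯ ⧢ u_k`: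
the ordered decompositions of `w` into `k` nonempty factors are parametrised by the
compositions `c` of `|w|` with `c.length = k`, the factors being
`w.splitWrtComposition c`. -/
noncomputable def D (w : List A) : List A →₀ ℝ :=
  ∑ c : Composition w.length,
    ((-1 : ℝ)) ^ (c.length - 1) • shuffleList (w.splitWrtComposition c)

lemma shuffle_nil_right (u : List A) : shuffle u [] = Finsupp.single u 1 := by
  cases u <;> simp [shuffle]

lemma shP_single_left (u : List A) (Q : List A →₀ ℝ) :
    shP (Finsupp.single u 1) Q = Finsupp.linearCombination ℝ (shuffle u) Q := by
  rw [shP, Finsupp.sum_single_index]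
  · simp [Finsupp.linearCombination_apply]
  · simp

lemma shuffleList_singleton (u : List A) : shuffleList [u] = Finsupp.single u 1 := by
  simp [shuffleList, shP_single_left, Finsupp.linearCombination_single, shuffle_nil_right]

lemma shuffleList_cons (u : List A) (L : List (List A)) :
    shuffleList (u :: L) = shP (Finsupp.single u 1) (shuffleList L) := rfl

instance : Unique (Composition 0) where
  default := ⟨[], by simp, by simp⟩
  uniq c := by
    have h1 := c.blocks_sum
    ext1
    cases hb : c.blocks with
    | nil => rfl
    | cons x t =>
      exfalso
      have hx := c.blocks_pos (by rw [hb]; exact List.mem_cons_self)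
      rw [hb] at h1; simp at h1; omega

noncomputable def compSplit (m : ℕ) :
    (Σ j : Fin (m + 1), Composition (m - j)) ≃ Composition (m + 1) where
  toFun x := ⟨((x.1 : ℕ) + 1) :: x.2.blocks, by
      intro i hi
      rcases List.mem_cons.1 hi with h | h
      · omega
      · exact x.2.blocks_pos h, by
      have h1 := x.2.blocks_sum
      have h2 := x.1.isLt
      simp only [List.sum_cons, h1]; omega⟩
  invFun c := ⟨⟨c.blocks.head! - 1, by
      have hs := c.blocks_sum
      have hne : c.blocks ≠ [] := by
        intro h; rw [h] at hs; simp at hs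
      have := c.one_le_blocks (List.head!_mem_self hne)
      have : c.blocks.head! ≤ c.blocks.sum := by
        conv_rhs => rw [← List.cons_head!_tail hne]
        simp
      omega⟩,
    ⟨c.blocks.tail, by
      intro i hi
      exact c.blocks_pos (List.mem_of_mem_tail hi), by
      have hs := c.blocks_sum
      have hne : c.blocks ≠ [] := by
        intro h; rw [h] at hs; simp at hs
      have h1 := c.one_le_blocks (List.head!_mem_self hne)
      have h2 : c.blocks.head! + c.blocks.tail.sum = m + 1 := by
        rw [← List.sum_cons, List.cons_head!_tail hne, hs]
      simp only
      omega⟩⟩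
  left_inv := fun ⟨j, c⟩ => rfl
  right_inv := by
    rintro c
    have hs := c.blocks_sum
    have hne : c.blocks ≠ [] := by intro h; rw [h] at hs; simp at hs
    have h1 := c.one_le_blocks (List.head!_mem_self hne)
    ext1
    simp only
    rw [show c.blocks.head! - 1 + 1 = c.blocks.head! by omega, List.cons_head!_tail hne]

lemma compSplit_length (m : ℕ) (j : Fin (m + 1)) (c : Composition (m - j)) :
    (compSplit m ⟨j, c⟩).length = c.length + 1 := by
  simp [compSplit, Composition.length]

lemma split_compSplit (m : ℕ) (w : List A) (j : Fin (m + 1)) (c : Composition (m - j)) :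
    w.splitWrtComposition (compSplit m ⟨j, c⟩) =
      w.take ((j : ℕ) + 1) :: (w.drop ((j : ℕ) + 1)).splitWrtComposition c := by
  simp [List.splitWrtComposition, compSplit, List.splitWrtCompositionAux_cons]

/-- **Recursion for the alternating decomposition sum** (expansion step in the proof of
Lemma 3.2): for every word `w = a₁⋯a_{n+1}` with `n ≥ 1`,
`D(w) = w − Σ_{k=0}^{n−1} (a₁⋯a_{k+1}) ⧢ D(a_{k+2}⋯a_{n+1})`. -/
theorem D_recursion (n : ℕ) (hn : 1 ≤ n) (a : Fin (n + 1) → A) :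
    D (List.ofFn a) =
      Finsupp.single (List.ofFn a) (1 : ℝ) -
        ∑ k ∈ Finset.range n,
          shP (Finsupp.single ((List.ofFn a).take (k + 1)) 1)
            (D ((List.ofFn a).drop (k + 1))) := by
  classical
  set w := List.ofFn a with hw
  have hlen : w.length = n + 1 := by simp [hw]
  have hd : ∀ k : ℕ, (w.drop (k + 1)).length = n - k := by
    intro k; simp [hlen]
  rw [D]
  rw [hlen]
  rw [← Equiv.sum_comp (compSplit n)
      (fun c => ((-1 : ℝ)) ^ (c.length - 1) • shuffleList (w.splitWrtComposition c)),
    ← Finset.univ_sigma_univ, Finset.sum_sigma]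
  simp only [compSplit_length, split_compSplit, shuffleList_cons]
  rw [Fin.sum_univ_eq_sum_range (fun k =>
    ∑ c : Composition (n - k),
      ((-1 : ℝ)) ^ (c.length + 1 - 1) •
        shP (Finsupp.single (w.take (k + 1)) 1)
          (shuffleList ((w.drop (k + 1)).splitWrtComposition c)))]
  rw [Finset.sum_range_succ]
  rw [Nat.sub_self, Fintype.sum_unique]
  have hdrop : List.drop (n + 1) w = [] := List.drop_eq_nil_of_le (by omega)
  have htake : List.take (n + 1) w = w := List.take_of_length_le (by omega)
  rw [hdrop, htake]
  have h0 : ([] : List A).splitWrtComposition (default : Composition 0) = [] := rfl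
  have hl0 : (default : Composition 0).length = 0 := rfl
  erw [h0, hl0]
  have hterm : ((-1 : ℝ)) ^ (0 + 1 - 1) •
      shP (Finsupp.single w (1 : ℝ)) (shuffleList ([] : List (List A))) = Finsupp.single w 1 := by
    simp [shuffleList, shP_single_left, Finsupp.linearCombination_single, shuffle_nil_right]
  rw [hterm, add_comm, sub_eq_add_neg, add_right_inj, ← Finset.sum_neg_distrib]
  refine Finset.sum_congr rfl fun k hk => ?_
  rw [Finset.mem_range] at hk
  rw [D, hd k]
  simp only [shP_single_left, map_sum, map_smul]
  rw [← Finset.sum_neg_distrib]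
  refine Finset.sum_congr rfl fun c _ => ?_
  have hL : 0 < c.length := c.length_pos_of_pos (by omega)
  rw [Nat.add_sub_cancel, show c.length = (c.length - 1) + 1 by omega, pow_succ,
    Nat.add_sub_cancel, mul_neg_one, neg_smul]
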